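/- Let A be a finite abelian group whose order n is coprime to 6, and let S ⊆ A be an inverse-closed subset of size k with 0 ∉ S such that Cay(A,S) is triangle-free, K_{2,3}-free and has diameter 2. Then 2n - 1 = (k+1)^2; in particular 2n - 1 is a perfect square. -/

import Mathlib

open SimpleGraph

/-- The Cayley graph of an abelian group `A` with connection set `S`:
`x` is adjacent to `y` iff `x - y ∈ S`. -/
def cayley {A : Type*} [AddCommGroup A] (S : Set A) : SimpleGraph A :=
  SimpleGraph.fromRel (fun x y => x - y ∈ S)

/-- If `A` is a finite abelian group of order `n` coprime to 6 and `S` is an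
inverse-closed `k`-subset with `0 ∉ S` whose Cayley graph is triangle-free,
`K_{2,3}`-free (non-adjacent vertices have at most 2 common neighbours) and has
diameter 2, then `2n - 1 = (k+1)²`. -/
theorem stmt11 {A : Type*} [AddCommGroup A] [Fintype A]
    (hcop : Nat.Coprime (Fintype.card A) 6)
    (S : Finset A) (hinv : ∀ s ∈ S, -s ∈ S) (h0 : (0 : A) ∉ S)
    (htf : (cayley (S : Set A)).CliqueFree 3)
    (hcodeg : ∀ u v : A, u ≠ v → ¬ (cayley (S : Set A)).Adj u v →
      {w : A | (cayley (S : Set A)).Adj u w ∧ (cayley (S : Set A)).Adj w v}.ncard ≤ 2)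
    (hdiam : ∀ u v : A, u ≠ v → (cayley (S : Set A)).Adj u v ∨
      ∃ w, (cayley (S : Set A)).Adj u w ∧ (cayley (S : Set A)).Adj w v) :
    2 * Fintype.card A - 1 = (S.card + 1) ^ 2 := by
  classical
  set G := cayley (S : Set A) with hG
  -- adjacency characterisation
  have hadj : ∀ u v : A, G.Adj u v ↔ u ≠ v ∧ u - v ∈ S := by
    intro u v
    rw [hG, cayley, SimpleGraph.fromRel_adj]
    constructor
    · rintro ⟨hne, h | h⟩
      · exact ⟨hne, h⟩
      · refine ⟨hne, ?_⟩
        have := hinv _ h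
        rwa [neg_sub] at this
    · rintro ⟨hne, h⟩
      exact ⟨hne, Or.inl h⟩
  -- doubling is injective
  have hdbl : Function.Injective (fun x : A => x + x) := by
    intro x y hxy
    have ha : (x - y) + (x - y) = 0 := by
      simp only at hxy
      rw [sub_add_sub_comm, hxy, sub_self]
    have h2 : (2 : ℕ) • (x - y) = 0 := by rw [two_nsmul]; exact ha
    have hd2 : addOrderOf (x - y) ∣ 2 := addOrderOf_dvd_of_nsmul_eq_zero h2
    have hdn : addOrderOf (x - y) ∣ Fintype.card A := addOrderOf_dvd_card
    have hc2 : Nat.Coprime (Fintype.card A) 2 := Nat.Coprime.coprime_dvd_right ⟨3, rfl⟩ hcop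
    have h1 : addOrderOf (x - y) ∣ 1 := hc2 ▸ Nat.dvd_gcd hdn hd2
    have := AddMonoid.addOrderOf_eq_one_iff.mp (Nat.dvd_one.mp h1)
    exact sub_eq_zero.mp this
  -- notation
  set n := Fintype.card A with hn
  -- membership, inverse-closure both ways
  have hSneg : ∀ x : A, x ∈ S ↔ -x ∈ S := by
    intro x
    constructor
    · exact hinv x
    · intro h; have := hinv _ h; rwa [neg_neg] at this
  have hSne0 : ∀ x ∈ S, x ≠ (0 : A) := by
    intro x hx h; exact h0 (h ▸ hx)
  -- triangle-freeness: sums of two elements of S avoid S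
  have hsum_not_S : ∀ x ∈ S, ∀ y ∈ S, x + y ∉ S := by
    intro x hx y hy hz
    refine htf {0, x, x + y} ?_
    rw [SimpleGraph.is3Clique_triple_iff]
    refine ⟨?_, ?_, ?_⟩
    · rw [hadj]
      refine ⟨Ne.symm (hSne0 x hx), ?_⟩
      rw [zero_sub, ← hSneg]; exact hx
    · rw [hadj]
      refine ⟨Ne.symm (hSne0 _ hz), ?_⟩
      rw [zero_sub, ← hSneg]; exact hz
    · rw [hadj]
      constructor
      · intro h
        exact hSne0 y hy (by rwa [left_eq_add] at h)
      · rw [show x - (x + y) = -y by abel, ← hSneg]; exact hy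
  -- fibers of the addition map
  set R : A → Finset (A × A) := fun z => (S ×ˢ S).filter (fun p => p.1 + p.2 = z) with hRdef
  have hmemR : ∀ (z : A) (p : A × A), p ∈ R z ↔ p.1 ∈ S ∧ p.2 ∈ S ∧ p.1 + p.2 = z := by
    intro z p
    simp [hRdef, Finset.mem_filter, Finset.mem_product, and_assoc]
  set T : Finset A := S.image (fun x => x + x) with hTdef
  have hTcard : T.card = S.card := Finset.card_image_of_injective S hdbl
  have h0T : (0 : A) ∉ T := by
    rw [hTdef]
    simp only [Finset.mem_image, not_exists]
    rintro x ⟨hx, hx0⟩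
    exact hSne0 x hx (hdbl (by simpa using hx0))
  have hST : Disjoint S T := by
    rw [Finset.disjoint_right]
    intro z hzT hzS
    rw [hTdef, Finset.mem_image] at hzT
    obtain ⟨x, hx, rfl⟩ := hzT
    exact hsum_not_S x hx x hx hzS
  -- non-adjacency of 0 and z for z ∉ S
  have hnotadj : ∀ z : A, z ∉ S → ¬ G.Adj 0 z := by
    intro z hz hA
    rw [hadj] at hA
    exact hz (by rw [hSneg]; simpa [zero_sub] using hA.2)
  -- the common-neighbour set of 0 and z is the image of the fiber
  have himg : ∀ z : A, {w : A | G.Adj 0 w ∧ G.Adj w z} = ↑((R z).image Prod.fst) := by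
    intro z
    ext w
    simp only [Set.mem_setOf_eq, Finset.coe_image, Set.mem_image, Finset.mem_coe]
    constructor
    · rintro ⟨h1, h2⟩
      rw [hadj] at h1 h2
      refine ⟨(w, z - w), ?_, rfl⟩
      rw [hmemR]
      refine ⟨?_, ?_, by rw [add_comm, sub_add_cancel]⟩
      · rw [hSneg]; simpa [zero_sub] using h1.2
      · rw [hSneg]; simpa [neg_sub] using h2.2
    · rintro ⟨p, hp, rfl⟩
      rw [hmemR] at hp
      obtain ⟨h1, h2, h3⟩ := hp
      constructor
      · rw [hadj]
        exact ⟨Ne.symm (hSne0 _ h1), by rw [zero_sub, ← hSneg]; exact h1⟩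
      · rw [hadj]
        constructor
        · intro h
          exact hSne0 _ h2 (add_left_cancel
            (show p.1 + p.2 = p.1 + 0 by rw [add_zero, h3, ← h]))
        · rw [show p.1 - z = -p.2 by rw [← h3]; abel, ← hSneg]; exact h2
  -- fiber cardinality bound from K_{2,3}-freeness
  have hfst_inj : ∀ z : A, Set.InjOn (Prod.fst : A × A → A) ↑(R z) := by
    intro z p hp q hq h
    rw [Finset.mem_coe, hmemR] at hp hq
    have : p.2 = q.2 := by
      have := hp.2.2.trans hq.2.2.symm
      rw [h] at this
      exact add_left_cancel this
    exact Prod.ext h this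
  have hcard_le : ∀ z : A, z ∉ S → z ≠ 0 → (R z).card ≤ 2 := by
    intro z hzS hz0
    have h1 := hcodeg 0 z (Ne.symm hz0) (hnotadj z hzS)
    rw [himg z, Set.ncard_coe_finset, Finset.card_image_of_injOn (hfst_inj z)] at h1
    exact h1
  -- fiber over 0 has cardinality k
  have hR0 : (R 0).card = S.card := by
    refine Finset.card_bij' (fun p _ => p.1) (fun x _ => (x, -x)) ?_ ?_ ?_ ?_
    · intro p hp; exact ((hmemR 0 p).mp hp).1
    · intro x hx
      rw [hmemR]
      exact ⟨hx, (hSneg x).mp hx, by simp⟩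
    · intro p hp
      rw [hmemR] at hp
      have : p.2 = -p.1 := by
        have h := hp.2.2
        rw [add_comm] at h
        exact eq_neg_of_add_eq_zero_left h
      exact Prod.ext rfl this.symm
    · intro x hx; rfl
  -- fibers over S are empty
  have hRS : ∀ z ∈ S, (R z).card = 0 := by
    intro z hz
    rw [Finset.card_eq_zero, Finset.eq_empty_iff_forall_notMem]
    intro p hp
    rw [hmemR] at hp
    exact hsum_not_S p.1 hp.1 p.2 hp.2.1 (hp.2.2 ▸ hz)
  -- fibers over T are singletons
  have hRT : ∀ z ∈ T, (R z).card = 1 := by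
    intro z hz
    rw [hTdef, Finset.mem_image] at hz
    obtain ⟨x, hx, rfl⟩ := hz
    have hzS : x + x ∉ S := hsum_not_S x hx x hx
    have hz0 : x + x ≠ 0 := fun h => hSne0 x hx (hdbl (by simpa using h))
    rw [Finset.card_eq_one]
    refine ⟨(x, x), ?_⟩
    rw [Finset.eq_singleton_iff_unique_mem]
    refine ⟨(hmemR _ _).mpr ⟨hx, hx, rfl⟩, ?_⟩
    rintro ⟨u, v⟩ hp
    rw [hmemR] at hp
    obtain ⟨hu, hv, huv⟩ := hp
    by_contra hne
    have hux : u ≠ x := by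
      rintro rfl
      exact hne (by rw [Prod.mk.injEq]; exact ⟨rfl, add_left_cancel huv⟩)
    have hvx : v ≠ x := by
      rintro rfl
      exact hux (add_right_cancel huv)
    have huvne : u ≠ v := by
      rintro rfl
      exact hux (hdbl huv)
    have hsub : ({(x, x), (u, v), (v, u)} : Finset (A × A)) ⊆ R (x + x) := by
      intro p hp
      simp only [Finset.mem_insert, Finset.mem_singleton] at hp
      rcases hp with rfl | rfl | rfl
      · exact (hmemR _ _).mpr ⟨hx, hx, rfl⟩
      · exact (hmemR _ _).mpr ⟨hu, hv, huv⟩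
      · exact (hmemR _ _).mpr ⟨hv, hu, by rw [add_comm]; exact huv⟩
    have hc3 : ({(x, x), (u, v), (v, u)} : Finset (A × A)).card = 3 := by
      rw [Finset.card_insert_of_notMem, Finset.card_insert_of_notMem, Finset.card_singleton]
      · simp [Prod.ext_iff, hvx, huvne]
      · simp only [Finset.mem_insert, Finset.mem_singleton]
        push_neg
        constructor
        · intro h; exact hne h.symm
        · simp [Prod.ext_iff]; intro h; exact absurd h.symm hvx
    have := Finset.card_le_card hsub
    rw [hc3] at this
    have h2 := hcard_le (x + x) hzS hz0
    omega
  -- fibers elsewhere have cardinality 2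
  have hRrest : ∀ z : A, z ∉ S → z ∉ T → z ≠ 0 → (R z).card = 2 := by
    intro z hzS hzT hz0
    refine le_antisymm (hcard_le z hzS hz0) ?_
    rcases hdiam 0 z (Ne.symm hz0) with hA | ⟨w, hw1, hw2⟩
    · exact absurd hA (hnotadj z hzS)
    rw [hadj] at hw1 hw2
    have hwS : w ∈ S := by rw [hSneg]; simpa [zero_sub] using hw1.2
    have hzwS : z - w ∈ S := by rw [hSneg]; simpa [neg_sub] using hw2.2
    have hne : w ≠ z - w := by
      intro h
      apply hzT
      rw [hTdef, Finset.mem_image]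
      exact ⟨w, hwS, (sub_eq_iff_eq_add.mp h.symm).symm⟩
    have hsub : ({(w, z - w), (z - w, w)} : Finset (A × A)) ⊆ R z := by
      intro p hp
      simp only [Finset.mem_insert, Finset.mem_singleton] at hp
      rcases hp with rfl | rfl
      · exact (hmemR _ _).mpr ⟨hwS, hzwS, by rw [add_comm, sub_add_cancel]⟩
      · exact (hmemR _ _).mpr ⟨hzwS, hwS, by rw [sub_add_cancel]⟩
    have hc2 : ({(w, z - w), (z - w, w)} : Finset (A × A)).card = 2 := by
      rw [Finset.card_insert_of_notMem, Finset.card_singleton]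
      simp [Prod.ext_iff, hne]
    have := Finset.card_le_card hsub
    omega
  -- global counting
  have hfib : S.card * S.card = ∑ z ∈ Finset.univ, (R z).card := by
    rw [← Finset.card_product S S]
    exact Finset.card_eq_sum_card_fiberwise (fun p _ => Finset.mem_univ _)
  set U : Finset A := insert 0 (S ∪ T) with hUdef
  have h0SU : (0 : A) ∉ S ∪ T := by
    rw [Finset.mem_union]; rintro (h | h); exacts [h0 h, h0T h]
  have hUcard : U.card = 2 * S.card + 1 := by
    rw [hUdef, Finset.card_insert_of_notMem h0SU, Finset.card_union_of_disjoint hST, hTcard]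
    ring
  set rest : Finset A := Finset.univ \ U with hrest
  have hrestcard : rest.card + U.card = n := Finset.card_sdiff_add_card_eq_card (Finset.subset_univ U)
  have hsplit : ∑ z ∈ Finset.univ, (R z).card
      = ∑ z ∈ rest, (R z).card + ∑ z ∈ U, (R z).card :=
    (Finset.sum_sdiff (Finset.subset_univ U)).symm
  have hsumU : ∑ z ∈ U, (R z).card = 2 * S.card := by
    rw [hUdef, Finset.sum_insert h0SU, Finset.sum_union hST, hR0,
      Finset.sum_eq_zero hRS, Finset.sum_congr rfl hRT]
    simp [hTcard]
    ring
  have hsumrest : ∑ z ∈ rest, (R z).card = 2 * rest.card := by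
    rw [Finset.sum_congr rfl (fun z hz => ?_), Finset.sum_const, smul_eq_mul, mul_comm]
    rw [hrest, Finset.mem_sdiff, hUdef] at hz
    simp only [Finset.mem_insert, Finset.mem_union, not_or] at hz
    exact hRrest z hz.2.2.1 hz.2.2.2 hz.2.1
  have hfinal : S.card * S.card = 2 * rest.card + 2 * S.card := by
    rw [hfib, hsplit, hsumU, hsumrest]
  have hexp : (S.card + 1) ^ 2 = S.card * S.card + 2 * S.card + 1 := by ring
  rw [hexp]
  omega
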